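/- arXiv:2605.30044 — 2 statements merged into one kernel-verified Lean document; each statement's English description precedes it below -/
import Mathlib

section
/- Let H be a real Hilbert space, and suppose 𝓗 : H → ℝ satisfies 𝓗(v) ≥ ‖v‖²(1 − C‖v‖) and 𝓗(v) ≤ ‖v‖²(1 + C‖v‖) for some C > 0 and all v. Set δ = 1/(4C). If v : [0,T] → H is continuous with ‖v(0)‖ ≤ δ and 𝓗(v(t)) = 𝓗(v(0)) for all t, then ‖v(t)‖ < 2δ for all t ∈ [0,T]. -/
/-- Abstract bootstrap argument: let `H` be a real Hilbert space and
`𝓗 : H → ℝ` satisfy `‖v‖²(1 − C‖v‖) ≤ 𝓗(v) ≤ ‖v‖²(1 + C‖v‖)` for some `C > 0`.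
Set `δ = 1/(4C)`.  If `v : [0,T] → H` is continuous, `‖v 0‖ ≤ δ` and
`𝓗(v t) = 𝓗(v 0)` for all `t ∈ [0,T]`, then `‖v t‖ < 2δ` on `[0,T]`. -/
theorem energy_bootstrap {H : Type*} [NormedAddCommGroup H] [InnerProductSpace ℝ H]
    [CompleteSpace H]
    (𝓗 : H → ℝ) (C : ℝ) (hC : 0 < C)
    (hlow : ∀ v : H, ‖v‖ ^ 2 * (1 - C * ‖v‖) ≤ 𝓗 v)
    (hup : ∀ v : H, 𝓗 v ≤ ‖v‖ ^ 2 * (1 + C * ‖v‖))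
    (T : ℝ) (hT : 0 ≤ T) (v : ℝ → H)
    (hv : ContinuousOn v (Set.Icc 0 T))
    (hv0 : ‖v 0‖ ≤ 1 / (4 * C))
    (hcons : ∀ t ∈ Set.Icc 0 T, 𝓗 (v t) = 𝓗 (v 0)) :
    ∀ t ∈ Set.Icc 0 T, ‖v t‖ < 2 * (1 / (4 * C)) := by
  set δ : ℝ := 1 / (4 * C) with hδ
  have hδpos : 0 < δ := by positivity
  have hCδ : C * δ = 1 / 4 := by
    rw [hδ]; field_simp
  -- key quantitative step
  have key : ∀ t ∈ Set.Icc (0:ℝ) T, ‖v t‖ ≤ 2 * δ → ‖v t‖ ≤ 8 / 5 * δ := by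
    intro t ht h2
    have h1 := hlow (v t)
    have h3 := hup (v 0)
    have hcons' := hcons t ht
    have hnt : (0:ℝ) ≤ ‖v t‖ := norm_nonneg _
    have hn0 : (0:ℝ) ≤ ‖v 0‖ := norm_nonneg _
    have hCt : C * ‖v t‖ ≤ 1 / 2 := by nlinarith
    have hC0 : C * ‖v 0‖ ≤ 1 / 4 := by nlinarith
    have h5 : ‖v 0‖ ^ 2 ≤ δ ^ 2 := by nlinarith
    have h6 : ‖v 0‖ ^ 2 * (C * ‖v 0‖) ≤ δ ^ 2 * (1 / 4) :=
      mul_le_mul h5 hC0 (by positivity) (by positivity)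
    have hA : ‖v t‖ ^ 2 * (1 / 2) ≤ ‖v t‖ ^ 2 * (1 - C * ‖v t‖) := by nlinarith [sq_nonneg ‖v t‖]
    have hsq : ‖v t‖ ^ 2 ≤ (8 / 5 * δ) ^ 2 := by nlinarith
    by_contra hcon
    push_neg at hcon
    nlinarith
  have h0T : (0:ℝ) ∈ Set.Icc 0 T := ⟨le_refl 0, hT⟩
  set f : Set.Icc (0:ℝ) T → ℝ := fun t => ‖v t‖ with hfdef
  have hf : Continuous f := continuous_norm.comp hv.restrict
  have hlt : 8 / 5 * δ < 2 * δ := by nlinarith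
  have hSeq : f ⁻¹' Set.Iic (8 / 5 * δ) = f ⁻¹' Set.Iio (2 * δ) := by
    ext t
    simp only [Set.mem_preimage, Set.mem_Iic, Set.mem_Iio]
    constructor
    · intro h; exact lt_of_le_of_lt h hlt
    · intro h; exact key t t.2 h.le
  have hclopen : IsClopen (f ⁻¹' Set.Iic (8 / 5 * δ)) := by
    constructor
    · exact isClosed_Iic.preimage hf
    · rw [hSeq]; exact isOpen_Iio.preimage hf
  have hpc : PreconnectedSpace (Set.Icc (0:ℝ) T) :=
    Subtype.preconnectedSpace isPreconnected_Icc
  have hne : (f ⁻¹' Set.Iic (8 / 5 * δ)).Nonempty := by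
    refine ⟨⟨0, h0T⟩, ?_⟩
    simp only [Set.mem_preimage, Set.mem_Iic, hfdef]
    calc ‖v 0‖ ≤ δ := hv0
    _ ≤ 8 / 5 * δ := by nlinarith
  have huniv : f ⁻¹' Set.Iic (8 / 5 * δ) = Set.univ := hclopen.eq_univ hne
  intro t ht
  have : (⟨t, ht⟩ : Set.Icc (0:ℝ) T) ∈ f ⁻¹' Set.Iic (8 / 5 * δ) := by
    rw [huniv]; trivial
  simp only [Set.mem_preimage, Set.mem_Iic, hfdef] at this
  exact lt_of_le_of_lt this hlt
end

section
/- Let s > 1/2 and R > 0, and set T = 1/(7·C_s·R) where C_s is the algebra constant of Hˢ(ℝ). For v₀ ∈ Hˢ×Hˢ with ‖v₀‖ ≤ R, the map 𝓐(v)(t) = S(t)v₀ − ∫₀ᵗ S(t−r)·K∂x(η u, u²/2)ᵀ(r) dr is a contraction on the closed ball of radius 2‖v₀‖ in C([0,T]; Hˢ×Hˢ), and hence admits a unique fixed point there. -/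
open MeasureTheory intervalIntegral Set

/-- The Duhamel (Picard) map `𝓐(v)(t) = S(t)v₀ − ∫₀ᵗ S(t−r) N(v(r)) dr`, where in the
application `E = Hˢ(ℝ) × Hˢ(ℝ)`, `S` is the unitary group of the linearized system and
`N(η,u) = K∂x(ηu, u²/2)ᵀ` is the (bounded) regularized nonlinearity. -/
noncomputable def duhamelMap {E : Type*} [NormedAddCommGroup E] [NormedSpace ℝ E]
    [CompleteSpace E] (S : ℝ → E →L[ℝ] E) (N : E → E) (v₀ : E) (v : ℝ → E) (t : ℝ) : E :=
  S t v₀ - ∫ r in (0 : ℝ)..t, S (t - r) (N (v r))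

/-- Local contraction for the regularized shallow-water system, abstractly.
Let `E` be a Banach space (playing the role of `Xˢ = Hˢ×Hˢ`, `s > 1/2`),
`S : ℝ → E →L[ℝ] E` a jointly continuous family of isometries (the unitary group),
and `N : E → E` the nonlinearity `v = (η,u) ↦ K∂x(ηu, u²/2)ᵀ`, satisfying
`‖N v‖ ≤ C_s ‖v‖²` and `‖N v₁ − N v₂‖ ≤ C_s ‖v₁ − v₂‖(‖v₁‖ + ‖v₂‖)`.
Let `R > 0`, `T = 1/(7 C_s R)` and `‖v₀‖ ≤ R`.  Then the map `𝓐` maps the closed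
ball of radius `2‖v₀‖` in `C([0,T]; E)` into itself, is a contraction there
(with contraction constant `4/7 < 1`), and hence admits a unique fixed point
in that ball. -/
theorem duhamel_contraction_and_fixed_point
    {E : Type*} [NormedAddCommGroup E] [NormedSpace ℝ E] [CompleteSpace E]
    (S : ℝ → E →L[ℝ] E)
    (hS_isom : ∀ (t : ℝ) (x : E), ‖S t x‖ = ‖x‖)
    (hS_cont : Continuous fun p : ℝ × E => S p.1 p.2)
    (N : E → E) (Cs : ℝ) (hCs : 0 < Cs)
    (hN : ∀ v : E, ‖N v‖ ≤ Cs * ‖v‖ ^ 2)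
    (hNlip : ∀ v₁ v₂ : E, ‖N v₁ - N v₂‖ ≤ Cs * ‖v₁ - v₂‖ * (‖v₁‖ + ‖v₂‖))
    (R : ℝ) (hR : 0 < R) (v₀ : E) (hv₀ : ‖v₀‖ ≤ R) :
    letI T : ℝ := 1 / (7 * Cs * R)
    -- 𝓐 maps the closed ball of radius 2‖v₀‖ into itself
    ((∀ v : ℝ → E, ContinuousOn v (Icc 0 T) → (∀ t ∈ Icc 0 T, ‖v t‖ ≤ 2 * ‖v₀‖) →
        ∀ t ∈ Icc 0 T, ‖duhamelMap S N v₀ v t‖ ≤ 2 * ‖v₀‖) ∧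
    -- 𝓐 is a contraction on this ball (in the supremum norm), with constant 4/7
    (∀ v₁ v₂ : ℝ → E, ContinuousOn v₁ (Icc 0 T) → ContinuousOn v₂ (Icc 0 T) →
        (∀ t ∈ Icc 0 T, ‖v₁ t‖ ≤ 2 * ‖v₀‖) → (∀ t ∈ Icc 0 T, ‖v₂ t‖ ≤ 2 * ‖v₀‖) →
        ∀ d : ℝ, (∀ t ∈ Icc 0 T, ‖v₁ t - v₂ t‖ ≤ d) →
        ∀ t ∈ Icc 0 T, ‖duhamelMap S N v₀ v₁ t - duhamelMap S N v₀ v₂ t‖ ≤ (4 / 7) * d) ∧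
    -- hence 𝓐 admits a unique fixed point in the ball
    (∃ v : ℝ → E,
      (ContinuousOn v (Icc 0 T) ∧ (∀ t ∈ Icc 0 T, ‖v t‖ ≤ 2 * ‖v₀‖) ∧
        ∀ t ∈ Icc 0 T, v t = duhamelMap S N v₀ v t) ∧
      ∀ w : ℝ → E,
        (ContinuousOn w (Icc 0 T) ∧ (∀ t ∈ Icc 0 T, ‖w t‖ ≤ 2 * ‖v₀‖) ∧
          ∀ t ∈ Icc 0 T, w t = duhamelMap S N v₀ w t) →
        ∀ t ∈ Icc 0 T, w t = v t)) := by
  set T : ℝ := 1 / (7 * Cs * R) with hTdef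
  have hT : 0 < T := by rw [hTdef]; positivity
  set n : ℝ := ‖v₀‖ with hn_def
  have hn : 0 ≤ n := norm_nonneg _
  -- continuity of N
  have hNcont : Continuous N := by
    rw [continuous_iff_continuousAt]
    intro x
    rw [ContinuousAt, tendsto_iff_norm_sub_tendsto_zero]
    have hc : Continuous fun y => Cs * ‖y - x‖ * (‖y‖ + ‖x‖) := by continuity
    have h0 := hc.tendsto x
    simp only [sub_self, norm_zero, mul_zero, zero_mul] at h0
    exact squeeze_zero (fun y => norm_nonneg _) (fun y => hNlip y x) h0
  -- integrand continuity
  have hInt : ∀ (v : ℝ → E), ContinuousOn v (Icc 0 T) → ∀ t ∈ Icc (0:ℝ) T,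
      ContinuousOn (fun r => S (t - r) (N (v r))) (Icc 0 t) := by
    intro v hv t ht
    have hsub : Icc (0:ℝ) t ⊆ Icc 0 T := Icc_subset_Icc le_rfl ht.2
    exact hS_cont.comp_continuousOn
      ((continuousOn_const.sub continuousOn_id).prodMk
        (hNcont.comp_continuousOn (hv.mono hsub)))
  have hIntble : ∀ (v : ℝ → E), ContinuousOn v (Icc 0 T) → ∀ t ∈ Icc (0:ℝ) T,
      IntervalIntegrable (fun r => S (t - r) (N (v r))) volume 0 t := by
    intro v hv t ht
    apply ContinuousOn.intervalIntegrable
    rw [uIcc_of_le ht.1]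
    exact hInt v hv t ht
  -- Part 1
  have part1 : ∀ v : ℝ → E, ContinuousOn v (Icc 0 T) → (∀ t ∈ Icc (0:ℝ) T, ‖v t‖ ≤ 2 * n) →
      ∀ t ∈ Icc (0:ℝ) T, ‖duhamelMap S N v₀ v t‖ ≤ 2 * n := by
    intro v hv hvb t ht
    have hb : ‖∫ r in (0:ℝ)..t, S (t - r) (N (v r))‖ ≤ Cs * (2*n)^2 * |t - 0| := by
      apply intervalIntegral.norm_integral_le_of_norm_le_const
      intro r hr
      rw [uIoc_of_le ht.1] at hr
      have hrT : r ∈ Icc (0:ℝ) T := ⟨hr.1.le, hr.2.trans ht.2⟩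
      rw [hS_isom]
      calc ‖N (v r)‖ ≤ Cs * ‖v r‖ ^ 2 := hN _
        _ ≤ Cs * (2*n)^2 := by
            have h1 := hvb r hrT
            have h2 : (0:ℝ) ≤ ‖v r‖ := norm_nonneg _
            exact mul_le_mul_of_nonneg_left (pow_le_pow_left₀ h2 h1 2) hCs.le
    have habs : |t - 0| ≤ T := by rw [sub_zero, abs_of_nonneg ht.1]; exact ht.2
    have habs0 : (0:ℝ) ≤ |t - 0| := abs_nonneg _
    have hfin : Cs * (2*n)^2 * |t - 0| ≤ n := by
      have h1 : Cs * (2*n)^2 * |t - 0| ≤ Cs * (2*n)^2 * T := by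
        apply mul_le_mul_of_nonneg_left habs (by positivity)
      have h2 : Cs * (2*n)^2 * T ≤ n := by
        rw [hTdef, mul_one_div, div_le_iff₀ (by positivity)]
        nlinarith [mul_nonneg (mul_nonneg hCs.le hn) (by linarith : (0:ℝ) ≤ 7*R - 4*n)]
      linarith
    calc ‖duhamelMap S N v₀ v t‖ ≤ ‖S t v₀‖ + ‖∫ r in (0:ℝ)..t, S (t - r) (N (v r))‖ :=
          norm_sub_le _ _
      _ ≤ n + n := by rw [hS_isom]; exact add_le_add le_rfl (hb.trans hfin)
      _ = 2 * n := by ring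
  -- Part 2
  have part2 : ∀ v₁ v₂ : ℝ → E, ContinuousOn v₁ (Icc 0 T) → ContinuousOn v₂ (Icc 0 T) →
      (∀ t ∈ Icc (0:ℝ) T, ‖v₁ t‖ ≤ 2 * n) → (∀ t ∈ Icc (0:ℝ) T, ‖v₂ t‖ ≤ 2 * n) →
      ∀ d : ℝ, (∀ t ∈ Icc (0:ℝ) T, ‖v₁ t - v₂ t‖ ≤ d) →
      ∀ t ∈ Icc (0:ℝ) T, ‖duhamelMap S N v₀ v₁ t - duhamelMap S N v₀ v₂ t‖ ≤ (4/7) * d := by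
    intro v₁ v₂ hv₁ hv₂ hb₁ hb₂ d hd t ht
    have hd0 : 0 ≤ d := le_trans (norm_nonneg _) (hd 0 ⟨le_rfl, hT.le⟩)
    have heq : duhamelMap S N v₀ v₁ t - duhamelMap S N v₀ v₂ t
        = ∫ r in (0:ℝ)..t, (S (t - r) (N (v₂ r)) - S (t - r) (N (v₁ r))) := by
      rw [intervalIntegral.integral_sub (hIntble v₂ hv₂ t ht) (hIntble v₁ hv₁ t ht)]
      simp only [duhamelMap]
      abel
    rw [heq]
    have hb : ‖∫ r in (0:ℝ)..t, (S (t - r) (N (v₂ r)) - S (t - r) (N (v₁ r)))‖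
        ≤ Cs * d * (4*n) * |t - 0| := by
      apply intervalIntegral.norm_integral_le_of_norm_le_const
      intro r hr
      rw [uIoc_of_le ht.1] at hr
      have hrT : r ∈ Icc (0:ℝ) T := ⟨hr.1.le, hr.2.trans ht.2⟩
      rw [← map_sub, hS_isom]
      calc ‖N (v₂ r) - N (v₁ r)‖ ≤ Cs * ‖v₂ r - v₁ r‖ * (‖v₂ r‖ + ‖v₁ r‖) := hNlip _ _
        _ ≤ Cs * d * (4*n) := by
            have h1 : ‖v₂ r - v₁ r‖ ≤ d := by rw [norm_sub_rev]; exact hd r hrT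
            have h2 := hb₁ r hrT
            have h3 := hb₂ r hrT
            have h4 : (0:ℝ) ≤ ‖v₂ r - v₁ r‖ := norm_nonneg _
            have h5 : (0:ℝ) ≤ ‖v₁ r‖ := norm_nonneg _
            have h6 : (0:ℝ) ≤ ‖v₂ r‖ := norm_nonneg _
            exact mul_le_mul (mul_le_mul_of_nonneg_left h1 hCs.le)
              (by linarith) (by linarith) (mul_nonneg hCs.le hd0)
    have habs : |t - 0| ≤ T := by rw [sub_zero, abs_of_nonneg ht.1]; exact ht.2
    have hfin : Cs * d * (4*n) * |t - 0| ≤ (4/7) * d := by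
      have h1 : Cs * d * (4*n) * |t - 0| ≤ Cs * d * (4*n) * T :=
        mul_le_mul_of_nonneg_left habs (by positivity)
      have h2 : Cs * d * (4*n) * T ≤ (4/7) * d := by
        rw [hTdef, mul_one_div, div_le_iff₀ (by positivity)]
        nlinarith [mul_nonneg (mul_nonneg hCs.le hd0) (sub_nonneg.2 hv₀)]
      linarith
    exact hb.trans hfin
  refine ⟨part1, part2, ?_⟩
  -- Part 3: fixed point via the contraction mapping principle in C([0,T]; E)
  have hTle : (0:ℝ) ≤ T := hT.le
  set extI : C(Icc (0:ℝ) T, E) → ℝ → E := fun f t => f (projIcc 0 T hTle t) with hextI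
  have hext_cont : ∀ f : C(Icc (0:ℝ) T, E), Continuous (extI f) := fun f =>
    f.continuous.comp continuous_projIcc
  have hext_eq : ∀ (f : C(Icc (0:ℝ) T, E)) (t : ℝ) (ht : t ∈ Icc (0:ℝ) T),
      extI f t = f ⟨t, ht⟩ := by
    intro f t ht
    simp only [hextI, projIcc_of_mem hTle ht]
  -- the Duhamel map of a continuous extension is continuous
  have hAcont : ∀ f : C(Icc (0:ℝ) T, E), Continuous fun t : ℝ => duhamelMap S N v₀ (extI f) t := by
    intro f
    simp only [duhamelMap]
    apply Continuous.sub
    · exact hS_cont.comp (continuous_id.prodMk continuous_const)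
    · apply intervalIntegral.continuous_parametric_intervalIntegral_of_continuous (μ := volume)
        (f := fun t r => S (t - r) (N (extI f r)))
      · exact hS_cont.comp ((continuous_fst.sub continuous_snd).prodMk
          (hNcont.comp ((hext_cont f).comp continuous_snd)))
      · exact continuous_id
  -- the ball B
  set B : Set C(Icc (0:ℝ) T, E) := {f | ∀ t, ‖f t‖ ≤ 2 * n} with hB_def
  have hBclosed : IsClosed B := by
    rw [hB_def]
    simp only [setOf_forall]
    exact isClosed_iInter fun t =>
      isClosed_le ((continuous_eval_const t).norm) continuous_const
  have hBne : Nonempty B := ⟨⟨(0 : C(Icc (0:ℝ) T, E)), fun t => by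
    simp only [ContinuousMap.zero_apply, norm_zero]; positivity⟩⟩
  haveI : CompleteSpace B := hBclosed.completeSpace_coe
  -- extension properties
  have hext_bd : ∀ f : C(Icc (0:ℝ) T, E), f ∈ B → ∀ t ∈ Icc (0:ℝ) T, ‖extI f t‖ ≤ 2 * n := by
    intro f hf t ht
    rw [hext_eq f t ht]
    exact hf _
  have hext_contOn : ∀ f : C(Icc (0:ℝ) T, E), ContinuousOn (extI f) (Icc 0 T) :=
    fun f => (hext_cont f).continuousOn
  -- the map Φ on B
  have hmem : ∀ f : C(Icc (0:ℝ) T, E), f ∈ B →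
      (ContinuousMap.mk (fun t : Icc (0:ℝ) T => duhamelMap S N v₀ (extI f) ↑t)
        ((hAcont f).comp continuous_subtype_val)) ∈ B := by
    intro f hf t
    exact part1 (extI f) (hext_contOn f) (hext_bd f hf) ↑t t.2
  set Φ : B → B := fun f => ⟨ContinuousMap.mk (fun t : Icc (0:ℝ) T =>
      duhamelMap S N v₀ (extI f.1) ↑t) ((hAcont f.1).comp continuous_subtype_val),
      hmem f.1 f.2⟩ with hΦ_def
  have hΦlip : ∀ f g : B, dist (Φ f) (Φ g) ≤ (4/7) * dist f g := by
    intro f g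
    rw [Subtype.dist_eq]
    rw [ContinuousMap.dist_le (by positivity)]
    intro t
    rw [dist_eq_norm]
    apply part2 (extI f.1) (extI g.1) (hext_contOn f.1) (hext_contOn g.1)
      (hext_bd f.1 f.2) (hext_bd g.1 g.2) (dist f g) ?_ ↑t t.2
    intro r hr
    rw [hext_eq f.1 r hr, hext_eq g.1 r hr, ← dist_eq_norm, Subtype.dist_eq f g]
    exact ContinuousMap.dist_apply_le_dist _
  have hcontr : ContractingWith (4/7 : NNReal) Φ := by
    constructor
    · rw [← NNReal.coe_lt_coe]
      norm_num
    · apply LipschitzWith.of_dist_le_mul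
      intro f g
      have hc : ((4/7 : NNReal) : ℝ) = (4/7 : ℝ) := by norm_num
      rw [hc]
      exact hΦlip f g
  -- the fixed point
  set g : B := hcontr.fixedPoint Φ with hg_def
  have hgfix : Φ g = g := hcontr.fixedPoint_isFixedPt
  set v : ℝ → E := extI g.1 with hv_def
  have hv_fix : ∀ t ∈ Icc (0:ℝ) T, v t = duhamelMap S N v₀ v t := by
    intro t ht
    calc v t = g.1 ⟨t, ht⟩ := hext_eq g.1 t ht
      _ = (Φ g).1 ⟨t, ht⟩ := by rw [hgfix]
      _ = duhamelMap S N v₀ v t := rfl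
  -- duhamelMap only depends on values on [0,T]
  have congrDuh : ∀ (u₁ u₂ : ℝ → E), (∀ r ∈ Icc (0:ℝ) T, u₁ r = u₂ r) →
      ∀ t ∈ Icc (0:ℝ) T, duhamelMap S N v₀ u₁ t = duhamelMap S N v₀ u₂ t := by
    intro u₁ u₂ h t ht
    simp only [duhamelMap]
    congr 1
    apply intervalIntegral.integral_congr
    intro r hr
    rw [uIcc_of_le ht.1] at hr
    simp only [h r ⟨hr.1, hr.2.trans ht.2⟩]
  refine ⟨v, ⟨hext_contOn g.1, hext_bd g.1 g.2, hv_fix⟩, ?_⟩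
  -- uniqueness
  rintro w ⟨hwc, hwb, hwfix⟩
  have hWmem : (ContinuousMap.mk ((Icc (0:ℝ) T).restrict w) hwc.restrict) ∈ B := by
    intro t
    exact hwb ↑t t.2
  set W : B := ⟨ContinuousMap.mk ((Icc (0:ℝ) T).restrict w) hwc.restrict, hWmem⟩ with hW_def
  have hWext : ∀ r ∈ Icc (0:ℝ) T, extI W.1 r = w r := by
    intro r hr
    rw [hext_eq W.1 r hr]
    rfl
  have hWfix : Φ W = W := by
    apply Subtype.ext
    apply ContinuousMap.ext
    intro t
    show duhamelMap S N v₀ (extI W.1) ↑t = w ↑t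
    rw [congrDuh (extI W.1) w hWext ↑t t.2]
    exact (hwfix ↑t t.2).symm
  have hWg : W = g := hcontr.fixedPoint_unique hWfix
  intro t ht
  calc w t = W.1 ⟨t, ht⟩ := rfl
    _ = g.1 ⟨t, ht⟩ := by rw [hWg]
    _ = v t := (hext_eq g.1 t ht).symm
end
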